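/- Fix integers d ≥ 2, n ≥ 1 and 0 ≤ k ≤ n. The set of all matrices M ∈ Sp(2n, Z_d) which, with respect to the partition of the row and column indices {1,…,2n} into four consecutive blocks of sizes (n−k, k, n−k, k), have the block form M = [[(Aᵀ)⁻¹, 0, 0, 0], [M₂₁, M₂₂, 0, M₂₄], [M₃₁, M₃₂, A, M₃₄], [M₄₁, M₄₂, 0, M₄₄]] for some invertible (n−k)×(n−k) matrix A over Z_d, is a subgroup of Sp(2n, Z_d): it contains the identity matrix and is closed under matrix multiplication and under taking inverses. -/

import Mathlib

open Matrix

/-- The standard symplectic form `Λ = [[0, I], [-I, 0]]` over `ZMod d`. -/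
def JJ (ι : Type) [Fintype ι] [DecidableEq ι] (d : ℕ) :
    Matrix (ι ⊕ ι) (ι ⊕ ι) (ZMod d) :=
  Matrix.fromBlocks 0 1 (-1) 0

/-- The set of symplectic matrices: `Mᵀ Λ M = Λ`. -/
def SpSet (ι : Type) [Fintype ι] [DecidableEq ι] (d : ℕ) :
    Set (Matrix (ι ⊕ ι) (ι ⊕ ι) (ZMod d)) :=
  {M | Mᵀ * JJ ι d * M = JJ ι d}

/-- Index of a block of size `n - k`. -/
abbrev BF (n k : ℕ) := Fin (n - k)
/-- Index of a block of size `k`. -/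
abbrev BK (k : ℕ) := Fin k
/-- Half of the row/column index set, partitioned into blocks of sizes `n-k` and `k`. -/
abbrev HalfIx (n k : ℕ) := BF n k ⊕ BK k
/-- The full row/column index set `{1, …, 2n}`, partitioned into four consecutive
blocks of sizes `(n-k, k, n-k, k)`. -/
abbrev FullIx (n k : ℕ) := HalfIx n k ⊕ HalfIx n k

/-- `M` has the block form `[[(Aᵀ)⁻¹,0,0,0],[M₂₁,M₂₂,0,M₂₄],[M₃₁,M₃₂,A,M₃₄],[M₄₁,M₄₂,0,M₄₄]]`
with respect to the partition into blocks of sizes `(n-k, k, n-k, k)`, for some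
invertible `(n-k)×(n-k)` matrix `A` over `Z_d`. -/
def HasBlockForm (n k d : ℕ) (M : Matrix (FullIx n k) (FullIx n k) (ZMod d)) : Prop :=
  ∃ A : Matrix (BF n k) (BF n k) (ZMod d), IsUnit A ∧
  ∃ (M21 : Matrix (BK k) (BF n k) (ZMod d)) (M22 M24 : Matrix (BK k) (BK k) (ZMod d))
    (M31 : Matrix (BF n k) (BF n k) (ZMod d)) (M32 M34 : Matrix (BF n k) (BK k) (ZMod d))
    (M41 : Matrix (BK k) (BF n k) (ZMod d)) (M42 M44 : Matrix (BK k) (BK k) (ZMod d)),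
    M = Matrix.fromBlocks
          (Matrix.fromBlocks (Aᵀ)⁻¹ 0 M21 M22) (Matrix.fromBlocks 0 0 0 M24)
          (Matrix.fromBlocks M31 M32 M41 M42) (Matrix.fromBlocks A M34 0 M44)

/-- The set of symplectic matrices with the block form of the trivial `[[n,k]]_d` code. -/
def Tset (n k d : ℕ) : Set (Matrix (FullIx n k) (FullIx n k) (ZMod d)) :=
  {M | M ∈ SpSet (HalfIx n k) d ∧ HasBlockForm n k d M}

section aux

variable {ι : Type} [Fintype ι] [DecidableEq ι] {d : ℕ}

lemma JJ_mul_JJ : JJ ι d * JJ ι d = -1 := by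
  rw [JJ, fromBlocks_multiply, ← fromBlocks_one (l := ι) (m := ι), fromBlocks_neg]
  simp

lemma isUnit_JJ : IsUnit (JJ ι d) :=
  ⟨⟨JJ ι d, -(JJ ι d), by rw [mul_neg, JJ_mul_JJ, neg_neg],
    by rw [neg_mul, JJ_mul_JJ, neg_neg]⟩, rfl⟩

lemma sp_isUnit {M : Matrix (ι ⊕ ι) (ι ⊕ ι) (ZMod d)} (h : M ∈ SpSet ι d) : IsUnit M := by
  rw [Matrix.isUnit_iff_isUnit_det]
  have hJ : IsUnit (JJ ι d).det := (Matrix.isUnit_iff_isUnit_det _).1 isUnit_JJ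
  have h2 := congrArg Matrix.det h
  rw [Matrix.det_mul, Matrix.det_mul, Matrix.det_transpose] at h2
  -- h2 : M.det * (JJ ι d).det * M.det = (JJ ι d).det
  have h3 : (JJ ι d).det * (M.det * M.det) = (JJ ι d).det * 1 := by
    rw [mul_one]; linear_combination h2
  exact IsUnit.of_mul_eq_one _ (hJ.mul_left_cancel h3)

lemma sp_inv_eq {M : Matrix (ι ⊕ ι) (ι ⊕ ι) (ZMod d)} (h : M ∈ SpSet ι d) :
    M⁻¹ = -(JJ ι d * Mᵀ * JJ ι d) := by
  apply Matrix.inv_eq_left_inv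
  have h2 : JJ ι d * Mᵀ * JJ ι d * M = -1 := by
    calc JJ ι d * Mᵀ * JJ ι d * M = JJ ι d * (Mᵀ * JJ ι d * M) := by
          simp only [mul_assoc]
      _ = -1 := by rw [h, JJ_mul_JJ]
  rw [neg_mul, h2, neg_neg]

lemma sp_inv_mem {M : Matrix (ι ⊕ ι) (ι ⊕ ι) (ZMod d)} (h : M ∈ SpSet ι d) :
    M⁻¹ ∈ SpSet ι d := by
  have hu : IsUnit M.det := (Matrix.isUnit_iff_isUnit_det M).1 (sp_isUnit h)
  have h1 : M * M⁻¹ = 1 := Matrix.mul_nonsing_inv M hu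
  show M⁻¹ᵀ * JJ ι d * M⁻¹ = JJ ι d
  calc M⁻¹ᵀ * JJ ι d * M⁻¹ = M⁻¹ᵀ * (Mᵀ * JJ ι d * M) * M⁻¹ := by rw [h]
    _ = (M * M⁻¹)ᵀ * JJ ι d * (M * M⁻¹) := by
        rw [Matrix.transpose_mul]; simp only [mul_assoc]
    _ = JJ ι d := by rw [h1]; simp

lemma sp_mul_mem {M N : Matrix (ι ⊕ ι) (ι ⊕ ι) (ZMod d)} (hM : M ∈ SpSet ι d)
    (hN : N ∈ SpSet ι d) : M * N ∈ SpSet ι d := by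
  show (M * N)ᵀ * JJ ι d * (M * N) = JJ ι d
  calc (M * N)ᵀ * JJ ι d * (M * N) = Nᵀ * (Mᵀ * JJ ι d * M) * N := by
        rw [Matrix.transpose_mul]; simp only [mul_assoc]
    _ = JJ ι d := by rw [hM]; exact hN

end aux

theorem stmt_0 (d n k : ℕ) (hd : 2 ≤ d) (hn : 1 ≤ n) (hkn : k ≤ n) :
    (1 : Matrix (FullIx n k) (FullIx n k) (ZMod d)) ∈ Tset n k d ∧
    (∀ M N : Matrix (FullIx n k) (FullIx n k) (ZMod d),
      M ∈ Tset n k d → N ∈ Tset n k d → M * N ∈ Tset n k d) ∧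
    (∀ M : Matrix (FullIx n k) (FullIx n k) (ZMod d), M ∈ Tset n k d → M⁻¹ ∈ Tset n k d) := by
  refine ⟨⟨?_, ?_⟩, ?_, ?_⟩
  · show (1 : Matrix _ _ _)ᵀ * JJ _ d * 1 = JJ _ d
    simp
  · exact ⟨1, isUnit_one, 0, 1, 0, 0, 0, 0, 0, 0, 1, by
      rw [← fromBlocks_one (l := HalfIx n k), ← fromBlocks_one (l := BF n k) (m := BK k)]
      simp [fromBlocks_zero]⟩
  · rintro M N ⟨hMs, A, hA, M21, M22, M24, M31, M32, M34, M41, M42, M44, rfl⟩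
      ⟨hNs, A', hA', N21, N22, N24, N31, N32, N34, N41, N42, N44, rfl⟩
    refine ⟨sp_mul_mem hMs hNs, A * A', hA.mul hA',
      M21 * (A'ᵀ)⁻¹ + M22 * N21 + M24 * N41, M22 * N22 + M24 * N42,
      M22 * N24 + M24 * N44,
      M31 * (A'ᵀ)⁻¹ + M32 * N21 + (A * N31 + M34 * N41),
      M32 * N22 + (A * N32 + M34 * N42),
      M32 * N24 + (A * N34 + M34 * N44),
      M41 * (A'ᵀ)⁻¹ + M42 * N21 + M44 * N41, M42 * N22 + M44 * N42,
      M42 * N24 + M44 * N44, ?_⟩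
    simp only [fromBlocks_multiply, fromBlocks_add, Matrix.transpose_mul,
      Matrix.mul_inv_rev, Matrix.zero_mul, Matrix.mul_zero, add_zero, zero_add,
      add_zero, zero_add]
  · rintro M ⟨hMs, A, hA, M21, M22, M24, M31, M32, M34, M41, M42, M44, hM⟩
    have hAdet : IsUnit A.det := (Matrix.isUnit_iff_isUnit_det A).1 hA
    have hinv : M⁻¹ = -(JJ (HalfIx n k) d * Mᵀ * JJ (HalfIx n k) d) := sp_inv_eq hMs
    refine ⟨sp_inv_mem hMs, A⁻¹, ?_, M34ᵀ, M44ᵀ, -M24ᵀ, -M31ᵀ, -M41ᵀ, M21ᵀ,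
      -M32ᵀ, -M42ᵀ, M22ᵀ, ?_⟩
    · rw [Matrix.isUnit_iff_isUnit_det, Matrix.isUnit_nonsing_inv_det_iff]
      exact hAdet
    · have hAT : ((A⁻¹)ᵀ)⁻¹ = Aᵀ := by
        rw [Matrix.transpose_nonsing_inv, Matrix.nonsing_inv_nonsing_inv]
        rwa [Matrix.det_transpose]
      rw [hinv, hM, hAT, JJ]
      simp only [fromBlocks_transpose, fromBlocks_multiply, fromBlocks_neg,
        Matrix.zero_mul, Matrix.mul_zero, Matrix.one_mul, Matrix.mul_one,
        Matrix.neg_mul, Matrix.mul_neg, add_zero, zero_add, neg_neg, neg_zero,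
        Matrix.transpose_zero, Matrix.transpose_nonsing_inv, Matrix.transpose_transpose]
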